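/- Let k be a field, h a finite-dimensional Lie algebra over k, and M a finite-dimensional Lie module over h with action (x,u) ↦ x·u. Let φ : h × M → h be bilinear and a 1-cocycle: [x, φ(y,u)] + φ(x, y·u) − [y, φ(x,u)] − φ(y, x·u) − φ([x,y], u) = 0 for all x,y,u. Let θ_m : M × M → M be an alternating bilinear map with δφ = dθ_m, i.e. φ(x,u₁)·u₂ − φ(x,u₂)·u₁ = x·θ_m(u₁,u₂) − θ_m(x·u₁,u₂) − θ_m(u₁,x·u₂) for all x,u₁,u₂. Define Qφ(x)(u₁,u₂) = φ(φ(x,u₁),u₂) − φ(φ(x,u₂),u₁) − φ(x, θ_m(u₁,u₂)) ∈ h. Then Qφ is closed: for all x,y ∈ h and u₁,u₂ ∈ M, [[x, Qφ(y)(u₁,u₂)] − Qφ(y)(x·u₁,u₂) − Qφ(y)(u₁,x·u₂)] − [[y, Qφ(x)(u₁,u₂)] − Qφ(x)(y·u₁,u₂) − Qφ(x)(u₁,y·u₂)] − Qφ([x,y])(u₁,u₂) = 0. -/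
import Mathlib


/-- Lemma L1: If `φ` is a 1-cocycle and `θ_m` is alternating with
`δφ = dθ_m`, then `Qφ(x)(u₁,u₂) = φ(φ(x,u₁),u₂) − φ(φ(x,u₂),u₁) − φ(x,θ_m(u₁,u₂))`
is a closed 1-cochain with values in `Λ²M*⊗h`. -/
theorem Q_phi_is_closed
    {k : Type*} [Field k] {h : Type*} [LieRing h] [LieAlgebra k h]
    [FiniteDimensional k h]
    {M : Type*} [AddCommGroup M] [Module k M] [LieRingModule h M] [LieModule k h M]
    [FiniteDimensional k M]
    (φ : h →ₗ[k] M →ₗ[k] h)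
    (hcocycle : ∀ (x y : h) (u : M),
      ⁅x, φ y u⁆ + φ x ⁅y, u⁆ - ⁅y, φ x u⁆ - φ y ⁅x, u⁆ - φ ⁅x, y⁆ u = 0)
    (θm : M →ₗ[k] M →ₗ[k] M)
    (halt : ∀ u : M, θm u u = 0)
    (hδφ : ∀ (x : h) (u₁ u₂ : M),
      ⁅φ x u₁, u₂⁆ - ⁅φ x u₂, u₁⁆
        = ⁅x, θm u₁ u₂⁆ - θm ⁅x, u₁⁆ u₂ - θm u₁ ⁅x, u₂⁆)
    (Qφ : h → M → M → h)
    (hQφ : ∀ (x : h) (u₁ u₂ : M),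
      Qφ x u₁ u₂ = φ (φ x u₁) u₂ - φ (φ x u₂) u₁ - φ x (θm u₁ u₂)) :
    ∀ (x y : h) (u₁ u₂ : M),
      (⁅x, Qφ y u₁ u₂⁆ - Qφ y ⁅x, u₁⁆ u₂ - Qφ y u₁ ⁅x, u₂⁆)
        - (⁅y, Qφ x u₁ u₂⁆ - Qφ x ⁅y, u₁⁆ u₂ - Qφ x u₁ ⁅y, u₂⁆)
        - Qφ ⁅x, y⁆ u₁ u₂ = 0 := by
  intro x y u₁ u₂
  have key :
      (⁅x, Qφ y u₁ u₂⁆ - Qφ y ⁅x, u₁⁆ u₂ - Qφ y u₁ ⁅x, u₂⁆)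
        - (⁅y, Qφ x u₁ u₂⁆ - Qφ x ⁅y, u₁⁆ u₂ - Qφ x u₁ ⁅y, u₂⁆)
        - Qφ ⁅x, y⁆ u₁ u₂
      =
        -(⁅x, φ y (θm u₁ u₂)⁆ + φ x ⁅y, (θm u₁ u₂)⁆ - ⁅y, φ x (θm u₁ u₂)⁆ - φ y ⁅x, (θm u₁ u₂)⁆ - φ ⁅x, y⁆ (θm u₁ u₂))
        +(⁅x, φ (φ y u₁) u₂⁆ + φ x ⁅(φ y u₁), u₂⁆ - ⁅(φ y u₁), φ x u₂⁆ - φ (φ y u₁) ⁅x, u₂⁆ - φ ⁅x, (φ y u₁)⁆ u₂)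
        -(⁅x, φ (φ y u₂) u₁⁆ + φ x ⁅(φ y u₂), u₁⁆ - ⁅(φ y u₂), φ x u₁⁆ - φ (φ y u₂) ⁅x, u₁⁆ - φ ⁅x, (φ y u₂)⁆ u₁)
        -(⁅y, φ (φ x u₁) u₂⁆ + φ y ⁅(φ x u₁), u₂⁆ - ⁅(φ x u₁), φ y u₂⁆ - φ (φ x u₁) ⁅y, u₂⁆ - φ ⁅y, (φ x u₁)⁆ u₂)
        +(⁅y, φ (φ x u₂) u₁⁆ + φ y ⁅(φ x u₂), u₁⁆ - ⁅(φ x u₂), φ y u₁⁆ - φ (φ x u₂) ⁅y, u₁⁆ - φ ⁅y, (φ x u₂)⁆ u₁)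
        -(φ x (⁅φ y u₁, u₂⁆ - ⁅φ y u₂, u₁⁆) - φ x (⁅y, θm u₁ u₂⁆ - θm ⁅y, u₁⁆ u₂ - θm u₁ ⁅y, u₂⁆))
        +(φ y (⁅φ x u₁, u₂⁆ - ⁅φ x u₂, u₁⁆) - φ y (⁅x, θm u₁ u₂⁆ - θm ⁅x, u₁⁆ u₂ - θm u₁ ⁅x, u₂⁆))
        +(φ (⁅x, φ y u₁⁆ + φ x ⁅y, u₁⁆ - ⁅y, φ x u₁⁆ - φ y ⁅x, u₁⁆ - φ ⁅x, y⁆ u₁) u₂)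
        -(φ (⁅x, φ y u₂⁆ + φ x ⁅y, u₂⁆ - ⁅y, φ x u₂⁆ - φ y ⁅x, u₂⁆ - φ ⁅x, y⁆ u₂) u₁)
        -(⁅φ x u₁, φ y u₂⁆ + ⁅φ y u₂, φ x u₁⁆)
        +(⁅φ x u₂, φ y u₁⁆ + ⁅φ y u₁, φ x u₂⁆) := by
    simp only [hQφ, map_add, map_sub, LinearMap.add_apply, LinearMap.sub_apply,
      lie_add, lie_sub, add_lie, sub_lie]
    abel
  rw [key, hcocycle x y (θm u₁ u₂), hcocycle x (φ y u₁) u₂, hcocycle x (φ y u₂) u₁,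
    hcocycle y (φ x u₁) u₂, hcocycle y (φ x u₂) u₁, hδφ y u₁ u₂, hδφ x u₁ u₂,
    hcocycle x y u₁, hcocycle x y u₂,
    ← lie_skew (φ x u₁) (φ y u₂), ← lie_skew (φ y u₁) (φ x u₂)]
  simp only [map_zero, LinearMap.zero_apply, neg_zero, sub_self]
  abel
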